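/- Let f be a φ_{h,m}-convex function on [0,b] with m ∈ (0,1], and let x, y ∈ [0,b] be such that 0 ≤ mφ(x) ≤ φ(x) ≤ mφ(y) < φ(y). Assume h is Lebesgue integrable on (0,1), that strict inequalities mφ(x) < φ(y) and φ(x) < mφ(y) hold, and that f is Lebesgue integrable on [mφ(x), φ(y)]. Then (1/(m+1))·[ (1/(φ(y) − mφ(x))) ∫_{mφ(x)}^{φ(y)} f(u) du + (1/(mφ(y) − φ(x))) ∫_{φ(x)}^{mφ(y)} f(u) du ] ≤ [f(φ(x)) + f(φ(y))]·∫₀¹ h(t) dt. -/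

import Mathlib

open MeasureTheory Set intervalIntegral

/-- A nonnegative function `f` on `[0,b]` is `φ_{h,m}`-convex if
`f (t·φ(x) + m·(1−t)·φ(y)) ≤ h(t)·f(φ(x)) + m·h(1−t)·f(φ(y))`
for all `x, y ∈ [0,b]` and `t ∈ (0,1)`. -/
def PhiHMConvex (b m : ℝ) (h φ f : ℝ → ℝ) : Prop :=
  (∀ x ∈ Set.Icc (0 : ℝ) b, 0 ≤ f x) ∧
  ∀ x ∈ Set.Icc (0 : ℝ) b, ∀ y ∈ Set.Icc (0 : ℝ) b, ∀ t ∈ Set.Ioo (0 : ℝ) 1,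
    f (t * φ x + m * (1 - t) * φ y) ≤ h t * f (φ x) + m * h (1 - t) * f (φ y)

private lemma aux_comp_integrable (f : ℝ → ℝ) (c d : ℝ) (hc : c ≠ 0)
    (hf : IntervalIntegrable f volume d (c + d)) :
    IntervalIntegrable (fun t => f (c * t + d)) volume 0 1 := by
  have h1 := hf.comp_add_right d
  have h1' : IntervalIntegrable (fun u => f (u + d)) volume 0 c := by
    simpa using h1
  have h2 := h1'.comp_mul_left (c := c)
  have : IntervalIntegrable (fun t => f (c * t + d)) volume (0 / c) (c / c) := by
    exact h2
  simpa [zero_div, div_self hc] using this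

private lemma aux_comp_integral (f : ℝ → ℝ) (c d : ℝ) (hc : c ≠ 0) :
    (∫ t in (0:ℝ)..1, f (c * t + d)) = c⁻¹ * ∫ u in d..(c + d), f u := by
  have := intervalIntegral.integral_comp_mul_add f hc d (a := 0) (b := 1)
  simpa [smul_eq_mul] using this

theorem phiHMConvex_two_interval_ineq (b m : ℝ) (h φ f : ℝ → ℝ)
    (hb : 0 < b) (hm : m ∈ Set.Ioc (0 : ℝ) 1)
    (hh : ∀ t ∈ Set.Ioo (0 : ℝ) 1, 0 ≤ h t) (hh0 : h ≠ 0)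
    (hφ : ∀ x ∈ Set.Icc (0 : ℝ) b, φ x ∈ Set.Icc (0 : ℝ) b)
    (hf : PhiHMConvex b m h φ f)
    (x : ℝ) (hx : x ∈ Set.Icc (0 : ℝ) b) (y : ℝ) (hy : y ∈ Set.Icc (0 : ℝ) b)
    (h0 : 0 ≤ m * φ x) (h1 : m * φ x ≤ φ x) (h2 : φ x ≤ m * φ y) (h3 : m * φ y < φ y)
    (h4 : m * φ x < φ y) (h5 : φ x < m * φ y)
    (hinth : IntervalIntegrable h volume 0 1)
    (hintf : IntervalIntegrable f volume (m * φ x) (φ y)) :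
    (1 / (m + 1)) *
        ((1 / (φ y - m * φ x)) * (∫ u in (m * φ x)..(φ y), f u) +
          (1 / (m * φ y - φ x)) * (∫ u in (φ x)..(m * φ y), f u)) ≤
      (f (φ x) + f (φ y)) * ∫ t in (0 : ℝ)..1, h t := by
  set A := φ x with hA
  set B := φ y with hB
  have hm0 : 0 < m := hm.1
  -- integrability of f on the subinterval [A, m*B]
  have hsub : Set.uIcc A (m * B) ⊆ Set.uIcc (m * A) B := by
    rw [Set.uIcc_of_le (le_of_lt h5), Set.uIcc_of_le (le_of_lt h4)]
    exact Set.Icc_subset_Icc h1 (le_of_lt h3)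
  have hintf2 : IntervalIntegrable f volume A (m * B) := hintf.mono_set hsub
  -- affine substitution data
  have hc1 : B - m * A ≠ 0 := by intro e; nlinarith
  have hc2 : A - m * B ≠ 0 := by intro e; nlinarith
  -- g1 t = f (t*B + m*(1-t)*A), g2 t = f (t*A + m*(1-t)*B)
  have hint1 : IntervalIntegrable (fun t => f ((B - m * A) * t + m * A)) volume 0 1 := by
    apply aux_comp_integrable f _ _ hc1
    simpa using hintf
  have hint2 : IntervalIntegrable (fun t => f ((A - m * B) * t + m * B)) volume 0 1 := by
    apply aux_comp_integrable f _ _ hc2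
    have : (A - m * B) + m * B = A := by ring
    rw [this]
    exact hintf2.symm
  have hinth' : IntervalIntegrable (fun t => h (1 - t)) volume 0 1 := by
    simpa using (hinth.comp_sub_left 1).symm
  have hintR1 : IntervalIntegrable (fun t => h t * f B + m * h (1 - t) * f A) volume 0 1 := by
    apply IntervalIntegrable.add (hinth.mul_const (f B))
    have := (hinth'.const_mul m).mul_const (f A)
    simpa [mul_assoc] using this
  have hintR2 : IntervalIntegrable (fun t => h t * f A + m * h (1 - t) * f B) volume 0 1 := by
    apply IntervalIntegrable.add (hinth.mul_const (f A))
    have := (hinth'.const_mul m).mul_const (f B)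
    simpa [mul_assoc] using this
  -- a.e. pointwise bounds on [0,1]
  have hnull : ∀ᵐ t ∂(volume.restrict (Set.Icc (0:ℝ) 1)), t ∉ ({0, 1} : Set ℝ) := by
    refine ae_restrict_of_ae ?_
    rw [← measure_eq_zero_iff_ae_notMem]
    exact (Set.toFinite _).measure_zero _
  have hmem : ∀ t ∈ Set.Icc (0:ℝ) 1, t ∉ ({0, 1} : Set ℝ) → t ∈ Set.Ioo (0:ℝ) 1 := by
    intro t ht hne
    simp only [Set.mem_insert_iff, Set.mem_singleton_iff, not_or] at hne
    exact ⟨lt_of_le_of_ne ht.1 (Ne.symm hne.1), lt_of_le_of_ne ht.2 hne.2⟩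
  have key1 : (∫ t in (0:ℝ)..1, f ((B - m * A) * t + m * A)) ≤
      ∫ t in (0:ℝ)..1, (h t * f B + m * h (1 - t) * f A) := by
    refine intervalIntegral.integral_mono_ae_restrict zero_le_one hint1 hintR1 ?_
    filter_upwards [ae_restrict_mem measurableSet_Icc, hnull] with t ht hne
    have htIoo := hmem t ht hne
    have := hf.2 y hy x hx t htIoo
    have e : t * φ y + m * (1 - t) * φ x = (B - m * A) * t + m * A := by
      rw [← hA, ← hB]; ring
    rw [e] at this
    simpa [← hA, ← hB] using this
  have key2 : (∫ t in (0:ℝ)..1, f ((A - m * B) * t + m * B)) ≤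
      ∫ t in (0:ℝ)..1, (h t * f A + m * h (1 - t) * f B) := by
    refine intervalIntegral.integral_mono_ae_restrict zero_le_one hint2 hintR2 ?_
    filter_upwards [ae_restrict_mem measurableSet_Icc, hnull] with t ht hne
    have htIoo := hmem t ht hne
    have := hf.2 x hx y hy t htIoo
    have e : t * φ x + m * (1 - t) * φ y = (A - m * B) * t + m * B := by
      rw [← hA, ← hB]; ring
    rw [e] at this
    simpa [← hA, ← hB] using this
  -- compute left sides
  have hL1 : (∫ t in (0:ℝ)..1, f ((B - m * A) * t + m * A))
      = (B - m * A)⁻¹ * ∫ u in (m * A)..B, f u := by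
    have := aux_comp_integral f (B - m * A) (m * A) hc1
    simpa using this
  have hL2 : (∫ t in (0:ℝ)..1, f ((A - m * B) * t + m * B))
      = (A - m * B)⁻¹ * ∫ u in (m * B)..A, f u := by
    have := aux_comp_integral f (A - m * B) (m * B) hc2
    have e : (A - m * B) + m * B = A := by ring
    rwa [e] at this
  -- compute right sides
  have hHrev : (∫ t in (0:ℝ)..1, h (1 - t)) = ∫ t in (0:ℝ)..1, h t := by
    have := intervalIntegral.integral_comp_sub_left h 1 (a := 0) (b := 1)
    simpa using this
  have hR1 : (∫ t in (0:ℝ)..1, (h t * f B + m * h (1 - t) * f A))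
      = (f B + m * f A) * ∫ t in (0:ℝ)..1, h t := by
    rw [intervalIntegral.integral_add (hinth.mul_const (f B))
      (by simpa [mul_assoc] using (hinth'.const_mul m).mul_const (f A))]
    rw [intervalIntegral.integral_mul_const]
    have : (∫ t in (0:ℝ)..1, m * h (1 - t) * f A)
        = m * f A * ∫ t in (0:ℝ)..1, h (1 - t) := by
      rw [show (fun t => m * h (1 - t) * f A) = (fun t => (m * f A) * h (1 - t)) from by
        funext t; ring]
      rw [intervalIntegral.integral_const_mul]
    rw [this, hHrev]; ring
  have hR2 : (∫ t in (0:ℝ)..1, (h t * f A + m * h (1 - t) * f B))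
      = (f A + m * f B) * ∫ t in (0:ℝ)..1, h t := by
    rw [intervalIntegral.integral_add (hinth.mul_const (f A))
      (by simpa [mul_assoc] using (hinth'.const_mul m).mul_const (f B))]
    rw [intervalIntegral.integral_mul_const]
    have : (∫ t in (0:ℝ)..1, m * h (1 - t) * f B)
        = m * f B * ∫ t in (0:ℝ)..1, h (1 - t) := by
      rw [show (fun t => m * h (1 - t) * f B) = (fun t => (m * f B) * h (1 - t)) from by
        funext t; ring]
      rw [intervalIntegral.integral_const_mul]
    rw [this, hHrev]; ring
  -- assemble
  have I1 : (B - m * A)⁻¹ * (∫ u in (m * A)..B, f u)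
      ≤ (f B + m * f A) * ∫ t in (0:ℝ)..1, h t := by
    rw [← hL1, ← hR1]; exact key1
  have I2 : (m * B - A)⁻¹ * (∫ u in A..(m * B), f u)
      ≤ (f A + m * f B) * ∫ t in (0:ℝ)..1, h t := by
    have e : (A - m * B)⁻¹ * ∫ u in (m * B)..A, f u
        = (m * B - A)⁻¹ * ∫ u in A..(m * B), f u := by
      rw [intervalIntegral.integral_symm]
      rw [show A - m * B = -(m * B - A) by ring, inv_neg]; ring
    rw [← e, ← hL2, ← hR2]; exact key2
  have hm1 : (0:ℝ) < m + 1 := by linarith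
  rw [one_div, inv_mul_le_iff₀ hm1]
  have hsum := add_le_add I1 I2
  rw [one_div, one_div]
  nlinarith [hsum]
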